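/- Define polynomials p_n ∈ ℚ[x] recursively by p_0(x) = 1 and p_n(x) = L_n(x) − Σ_{k=0}^{n−1} (p_k(x)/k!) D^k[x^n] for n ≥ 1, and define a : ℕ → ℚ by a_0 = 1 and a_r = (−1)^r/r! − Σ_{k=0}^{r−1} binom(r,k)·a_k for r ≥ 1. Then for all n ≥ 0 and all 0 ≤ r ≤ n, the coefficient of x^r in p_n(x) equals binom(n,r)·a_r. -/

import Mathlib

open Polynomial Finset

lemma aux_fact (n r j : ℕ) (hr : r ≤ n) (hj : j < r) :
    (1 / (((n - r + j).factorial : ℚ))) * (Nat.descFactorial n (n - r + j) : ℚ) *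
      (((n - r + j).choose j : ℚ)) = (n.choose r : ℚ) * (r.choose j : ℚ) := by
  set k := n - r + j with hk
  have hkn : k ≤ n := by omega
  have hnk : n - k = r - j := by omega
  have hjk : j ≤ k := by omega
  have hkj : k - j = n - r := by omega
  have hd : ((r - j).factorial : ℚ) * (Nat.descFactorial n k : ℚ) = (n.factorial : ℚ) := by
    rw [← Nat.cast_mul, ← hnk, Nat.factorial_mul_descFactorial hkn]
  have hdesc : (Nat.descFactorial n k : ℚ) = (n.factorial : ℚ) / ((r - j).factorial : ℚ) := by
    field_simp [← hd]
    linear_combination hd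
  rw [hdesc, Nat.cast_choose ℚ hjk, Nat.cast_choose ℚ hr, Nat.cast_choose ℚ hj.le, hkj]
  have h1 : ((k.factorial : ℚ)) ≠ 0 := Nat.cast_ne_zero.2 (Nat.factorial_ne_zero _)
  have h2 : (((r - j).factorial : ℚ)) ≠ 0 := Nat.cast_ne_zero.2 (Nat.factorial_ne_zero _)
  have h3 : ((j.factorial : ℚ)) ≠ 0 := Nat.cast_ne_zero.2 (Nat.factorial_ne_zero _)
  have h4 : (((n - r).factorial : ℚ)) ≠ 0 := Nat.cast_ne_zero.2 (Nat.factorial_ne_zero _)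
  have h5 : ((r.factorial : ℚ)) ≠ 0 := Nat.cast_ne_zero.2 (Nat.factorial_ne_zero _)
  field_simp

theorem stmt_10 (L p : ℕ → Polynomial ℚ) (a : ℕ → ℚ)
    (hL : ∀ n : ℕ, L n = ∑ r ∈ Finset.range (n + 1),
      Polynomial.C ((n.choose r : ℚ) * ((-1) ^ r / (r.factorial : ℚ))) * Polynomial.X ^ r)
    (hp0 : p 0 = 1)
    (hp : ∀ n : ℕ, 1 ≤ n → p n = L n - ∑ k ∈ Finset.range n,
      Polynomial.C (1 / (k.factorial : ℚ)) * p k * Polynomial.derivative^[k] (Polynomial.X ^ n))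
    (ha0 : a 0 = 1)
    (ha : ∀ r : ℕ, 1 ≤ r →
      a r = (-1) ^ r / (r.factorial : ℚ) - ∑ k ∈ Finset.range r, (r.choose k : ℚ) * a k) :
    ∀ n r : ℕ, r ≤ n → (p n).coeff r = (n.choose r : ℚ) * a r := by
  intro n
  induction n using Nat.strong_induction_on with
  | _ n ih =>
    intro r hr
    rcases Nat.eq_zero_or_pos n with hn0 | hn1
    · subst hn0
      interval_cases r
      simp [hp0, ha0]
    · rw [hp n hn1, coeff_sub, hL, finset_sum_coeff]
      -- first sum
      have hLc : (∑ s ∈ Finset.range (n + 1),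
          (Polynomial.C ((n.choose s : ℚ) * ((-1) ^ s / (s.factorial : ℚ))) *
            Polynomial.X ^ s).coeff r) = (n.choose r : ℚ) * ((-1) ^ r / (r.factorial : ℚ)) := by
        simp only [coeff_C_mul, coeff_X_pow, mul_ite, mul_one, mul_zero]
        rw [Finset.sum_ite_eq (Finset.range (n + 1)) r]
        simp [Nat.lt_succ_of_le hr]
      rw [hLc, finset_sum_coeff]
      -- second sum: compute each coefficient
      have hterm : ∀ k ∈ Finset.range n,
          (Polynomial.C (1 / (k.factorial : ℚ)) * p k *
            Polynomial.derivative^[k] (Polynomial.X ^ n)).coeff r =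
          (if n - k ≤ r then
            (1 / (k.factorial : ℚ)) * (Nat.descFactorial n k : ℚ) *
              ((k.choose (r - (n - k)) : ℚ) * a (r - (n - k)))
          else 0) := by
        intro k hk
        rw [Finset.mem_range] at hk
        rw [iterate_derivative_X_pow_eq_C_mul]
        have : Polynomial.C (1 / (k.factorial : ℚ)) * p k *
            (Polynomial.C (Nat.descFactorial n k : ℚ) * Polynomial.X ^ (n - k)) =
            Polynomial.C (1 / (k.factorial : ℚ) * (Nat.descFactorial n k : ℚ)) *
              p k * Polynomial.X ^ (n - k) := by
          simp only [C_mul]; ring_nf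
        rw [this, mul_assoc, coeff_C_mul, coeff_mul_X_pow']
        split_ifs with h
        · rw [ih k hk (r - (n - k)) (by omega)]
        · simp
      rw [Finset.sum_congr rfl hterm]
      -- restrict sum to Ico (n-r) n then reindex
      set g : ℕ → ℚ := fun k => if n - k ≤ r then
          (1 / (k.factorial : ℚ)) * (Nat.descFactorial n k : ℚ) *
            ((k.choose (r - (n - k)) : ℚ) * a (r - (n - k))) else 0 with hg
      have hsub : Finset.Ico (n - r) n ⊆ Finset.range n := by
        intro x hx; rw [Finset.mem_Ico] at hx; rw [Finset.mem_range]; exact hx.2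
      have hzero : ∀ k ∈ Finset.range n, k ∉ Finset.Ico (n - r) n → g k = 0 := by
        intro k hk hk2
        rw [Finset.mem_range] at hk
        rw [Finset.mem_Ico] at hk2
        have : k < n - r := by omega
        simp only [hg]
        rw [if_neg (by omega)]
      have hres : (∑ k ∈ Finset.range n, g k) = ∑ k ∈ Finset.Ico (n - r) n, g k :=
        (Finset.sum_subset hsub hzero).symm
      rw [hres, Finset.sum_Ico_eq_sum_range]
      have hnr : n - (n - r) = r := by omega
      rw [hnr]
      have hterm2 : ∀ j ∈ Finset.range r,
          g (n - r + j) = (n.choose r : ℚ) * ((r.choose j : ℚ) * a j) := by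
        intro j hj
        rw [Finset.mem_range] at hj
        simp only [hg]
        rw [if_pos (by omega)]
        have h1 : n - (n - r + j) = r - j := by omega
        have h2 : r - (r - j) = j := by omega
        rw [h1, h2, ← mul_assoc]
        rw [aux_fact n r j hr hj]
        ring
      rw [Finset.sum_congr rfl hterm2, ← Finset.mul_sum]
      rcases Nat.eq_zero_or_pos r with hr0 | hr1
      · subst hr0; simp [ha0]
      · rw [ha r hr1]; ring
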